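/- (Bernstein's condition with exponent 1 for the square loss) In the linear regression setting, if E[(Xz)²] > 0 for every unit vector z ∈ ℝ^d, then there exists B > 0 such that for all u ∈ ℝ^d with ‖u‖₂ ≤ M_u: E[ ((Y − Xu)² − (Y − Xu₀)²)² ] ≤ B ( R(u) − R(u₀) ); that is, the square loss satisfies the (multi-scale) Bernstein's condition with order α = 1. -/

import Mathlib

open MeasureTheory Real
open scoped RealInnerProductSpace

noncomputable section

variable {Ω : Type*} [MeasurableSpace Ω] {d : ℕ}

/-- The risk of the square loss, `R(u) = E[(Y − Xu)²]`. -/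
def riskLR (P : Measure Ω) (X : Ω → EuclideanSpace ℝ (Fin d)) (Y : Ω → ℝ)
    (u : EuclideanSpace ℝ (Fin d)) : ℝ :=
  ∫ ω, (Y ω - ⟪X ω, u⟫) ^ 2 ∂P

/-- **Bernstein's condition with exponent 1 for the square loss.** If `E[(Xz)²] > 0` for
every unit vector `z`, then there is `B > 0` such that for all `u` with `‖u‖₂ ≤ M_u`,
`E[((Y − Xu)² − (Y − Xu₀)²)²] ≤ B (R(u) − R(u₀))`. -/
theorem bernstein_condition_sq_loss
    (P : Measure Ω) [IsProbabilityMeasure P]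
    (X : Ω → EuclideanSpace ℝ (Fin d)) (hXmeas : Measurable X)
    (e : Ω → ℝ) (hemeas : Measurable e)
    (u₀ : EuclideanSpace ℝ (Fin d))
    (M_X M_u : ℝ) (hMX : 0 < M_X) (hMu : 0 < M_u)
    (hXbdd : ∀ᵐ ω ∂P, ‖X ω‖ ≤ M_X) (hu₀ : ‖u₀‖ ≤ M_u)
    (k : ℝ) (hk : 2 < k)
    (hmean : ∫ ω, e ω ∂P = 0)
    (hvar : ∫ ω, e ω ^ 2 ∂P = k / (k - 2))
    (hmom : ∀ r : ℝ, 0 < r → r < k → Integrable (fun ω => |e ω| ^ r) P)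
    (hindep : ProbabilityTheory.IndepFun e X P)
    (Y : Ω → ℝ) (hY : ∀ ω, Y ω = ⟪X ω, u₀⟫ + e ω)
    (hpos : ∀ z : EuclideanSpace ℝ (Fin d), ‖z‖ = 1 → 0 < ∫ ω, ⟪X ω, z⟫ ^ 2 ∂P)
    :
    ∃ B : ℝ, 0 < B ∧ ∀ u : EuclideanSpace ℝ (Fin d), ‖u‖ ≤ M_u →
      ∫ ω, ((Y ω - ⟪X ω, u⟫) ^ 2 - (Y ω - ⟪X ω, u₀⟫) ^ 2) ^ 2 ∂P ≤
        B * (riskLR P X Y u - riskLR P X Y u₀) := by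
  have hσ : (0:ℝ) < k / (k - 2) := div_pos (by linarith) (by linarith)
  -- integrability of e and e²
  have he1 : Integrable e P := by
    have h := hmom 1 one_pos (by linarith)
    simp only [Real.rpow_one] at h
    exact (integrable_norm_iff hemeas.aestronglyMeasurable).mp
      (by simpa [Real.norm_eq_abs] using h)
  have he2 : Integrable (fun ω => e ω ^ 2) P := by
    have h := hmom 2 two_pos hk
    have heq : (fun ω => |e ω| ^ (2:ℝ)) = fun ω => e ω ^ 2 := by
      funext ω
      rw [show (2:ℝ) = ((2:ℕ):ℝ) by norm_num, Real.rpow_natCast, sq_abs]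
    rwa [heq] at h
  set C : ℝ := M_X * (2 * M_u) with hC
  have hCpos : 0 < C := by positivity
  refine ⟨C ^ 2 + 4 * (k / (k - 2)), by positivity, fun u hu => ?_⟩
  set v := u₀ - u with hv
  set s : Ω → ℝ := fun ω => ⟪X ω, v⟫ with hs
  have hφcont : Continuous fun x : EuclideanSpace ℝ (Fin d) => ⟪x, v⟫ :=
    continuous_id.inner continuous_const
  have hsmeas : Measurable s := hφcont.measurable.comp hXmeas
  have hsb : ∀ᵐ ω ∂P, |s ω| ≤ C := by
    filter_upwards [hXbdd] with ω hω
    calc |s ω| ≤ ‖X ω‖ * ‖v‖ := abs_real_inner_le_norm _ _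
      _ ≤ M_X * (2 * M_u) := by
          apply mul_le_mul hω ?_ (norm_nonneg _) hMX.le
          calc ‖v‖ ≤ ‖u₀‖ + ‖u‖ := norm_sub_le _ _
            _ ≤ 2 * M_u := by linarith
  -- bounds for powers of s
  have hsb2 : ∀ᵐ ω ∂P, ‖s ω ^ 2‖ ≤ C ^ 2 := by
    filter_upwards [hsb] with ω hω
    rw [Real.norm_eq_abs, abs_pow]
    exact pow_le_pow_left₀ (abs_nonneg _) hω 2
  have hsb1 : ∀ᵐ ω ∂P, ‖s ω‖ ≤ C := by
    filter_upwards [hsb] with ω hω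
    rwa [Real.norm_eq_abs]
  have hsb3 : ∀ᵐ ω ∂P, ‖s ω ^ 3‖ ≤ C ^ 3 := by
    filter_upwards [hsb] with ω hω
    rw [Real.norm_eq_abs, abs_pow]
    exact pow_le_pow_left₀ (abs_nonneg _) hω 3
  -- integrability of the various products
  have hs2 : Integrable (fun ω => s ω ^ 2) P := by
    have := (integrable_const (1:ℝ)).bdd_mul
      ((hsmeas.pow_const 2).aestronglyMeasurable) hsb2
    simpa using this
  have hs4 : Integrable (fun ω => s ω ^ 4) P := by
    have := hs2.bdd_mul ((hsmeas.pow_const 2).aestronglyMeasurable) hsb2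
    have heq : (fun ω => s ω ^ 2 * s ω ^ 2) = fun ω => s ω ^ 4 := by
      funext ω; ring
    rwa [heq] at this
  have hse : Integrable (fun ω => s ω * e ω) P :=
    he1.bdd_mul hsmeas.aestronglyMeasurable hsb1
  have hs3e : Integrable (fun ω => s ω ^ 3 * e ω) P :=
    he1.bdd_mul ((hsmeas.pow_const 3).aestronglyMeasurable) hsb3
  have hs2e2 : Integrable (fun ω => s ω ^ 2 * e ω ^ 2) P :=
    he2.bdd_mul ((hsmeas.pow_const 2).aestronglyMeasurable) hsb2
  -- independence facts
  have hXe : ProbabilityTheory.IndepFun X e P := hindep.symm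
  have hind1 : ProbabilityTheory.IndepFun s e P :=
    hXe.comp hφcont.measurable measurable_id
  have hind3 : ProbabilityTheory.IndepFun (fun ω => s ω ^ 3) e P :=
    hXe.comp ((hφcont.measurable).pow_const 3) measurable_id
  have hind22 : ProbabilityTheory.IndepFun (fun ω => s ω ^ 2) (fun ω => e ω ^ 2) P :=
    hXe.comp ((hφcont.measurable).pow_const 2) (measurable_id.pow_const 2)
  have hise : ∫ ω, s ω * e ω ∂P = 0 := by
    rw [hind1.integral_fun_mul_eq_mul_integral hsmeas.aestronglyMeasurable hemeas.aestronglyMeasurable, hmean,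
      mul_zero]
  have his3e : ∫ ω, s ω ^ 3 * e ω ∂P = 0 := by
    rw [hind3.integral_fun_mul_eq_mul_integral ((hsmeas.pow_const 3)).aestronglyMeasurable
      hemeas.aestronglyMeasurable, hmean, mul_zero]
  have his2e2 : ∫ ω, s ω ^ 2 * e ω ^ 2 ∂P = (∫ ω, s ω ^ 2 ∂P) * (k / (k - 2)) := by
    rw [hind22.integral_fun_mul_eq_mul_integral ((hsmeas.pow_const 2)).aestronglyMeasurable
      ((hemeas.pow_const 2)).aestronglyMeasurable, hvar]
  -- pointwise identities
  have hsinner : ∀ ω, s ω = ⟪X ω, u₀⟫ - ⟪X ω, u⟫ := fun ω => inner_sub_right _ _ _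
  have hpt : ∀ ω, ((Y ω - ⟪X ω, u⟫) ^ 2 - (Y ω - ⟪X ω, u₀⟫) ^ 2) ^ 2
      = s ω ^ 4 + 4 * (s ω ^ 3 * e ω) + 4 * (s ω ^ 2 * e ω ^ 2) := by
    intro ω
    rw [hY, hsinner]
    ring
  have hpt2 : ∀ ω, (Y ω - ⟪X ω, u⟫) ^ 2 = e ω ^ 2 + (2 * (s ω * e ω) + s ω ^ 2) := by
    intro ω
    rw [hY, hsinner]
    ring
  have hpt0 : ∀ ω, (Y ω - ⟪X ω, u₀⟫) ^ 2 = e ω ^ 2 := by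
    intro ω
    rw [hY]
    ring
  -- compute the risk difference
  have hrisk : riskLR P X Y u - riskLR P X Y u₀ = ∫ ω, s ω ^ 2 ∂P := by
    unfold riskLR
    have hg1 : Integrable (fun ω => 2 * (s ω * e ω) + s ω ^ 2) P := (hse.const_mul 2).add hs2
    rw [integral_congr_ae (Filter.Eventually.of_forall hpt2),
      integral_congr_ae (Filter.Eventually.of_forall hpt0),
      integral_add he2 hg1, integral_add (hse.const_mul 2) hs2, integral_const_mul, hise]
    ring
  -- compute the left-hand side
  have hlhs : ∫ ω, ((Y ω - ⟪X ω, u⟫) ^ 2 - (Y ω - ⟪X ω, u₀⟫) ^ 2) ^ 2 ∂P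
      = (∫ ω, s ω ^ 4 ∂P) + 4 * ((∫ ω, s ω ^ 2 ∂P) * (k / (k - 2))) := by
    have hg2 : Integrable (fun ω => s ω ^ 4 + 4 * (s ω ^ 3 * e ω)) P := hs4.add (hs3e.const_mul 4)
    rw [integral_congr_ae (Filter.Eventually.of_forall hpt),
      integral_add hg2 (hs2e2.const_mul 4), integral_add hs4 (hs3e.const_mul 4),
      integral_const_mul, integral_const_mul, his3e, his2e2]
    ring
  -- the fourth moment bound
  have hI0 : 0 ≤ ∫ ω, s ω ^ 2 ∂P := integral_nonneg fun ω => sq_nonneg _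
  have h4le : ∫ ω, s ω ^ 4 ∂P ≤ C ^ 2 * ∫ ω, s ω ^ 2 ∂P := by
    rw [← integral_const_mul]
    refine integral_mono_ae hs4 (hs2.const_mul _) ?_
    filter_upwards [hsb] with ω hω
    have h2 : s ω ^ 2 ≤ C ^ 2 := by
      have := abs_nonneg (s ω)
      nlinarith [sq_abs (s ω)]
    nlinarith [sq_nonneg (s ω)]
  rw [hlhs, hrisk]
  nlinarith [hσ, hI0]
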